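/- If each cost C_m is convex, each utility U_n is concave, and each per-slot price pair satisfies β_t ≤ α_t, then the objective F(p_G, p_D, p_R) := Σ_{t,m} C_m(P^t_{G_m}) − Σ_{t,n} U_n(P^t_{D_n}) + G(p_R), with G the expected transaction cost, is a convex function of (p_G, p_D, p_R). -/

import Mathlib

open MeasureTheory

lemma key_convex (a b w : ℝ) (h : b ≤ a) :
    ConvexOn ℝ Set.univ (fun p : ℝ => a * max (p - w) 0 - b * (-(min (p - w) 0))) := by
  have heq : (fun p : ℝ => a * max (p - w) 0 - b * (-(min (p - w) 0)))
      = fun p => b * (p - w) + (a - b) * max (p - w) 0 := by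
    funext p
    rcases le_total (p - w) 0 with hp | hp
    · rw [max_eq_right hp, min_eq_left hp]; ring
    · rw [max_eq_left hp, min_eq_right hp]; ring
  rw [heq]
  have h1 : ConvexOn ℝ Set.univ (fun p : ℝ => b * (p - w)) := by
    refine ⟨convex_univ, ?_⟩
    intro x _ y _ p q hp hq hpq
    simp only [smul_eq_mul]
    have : b * (p * x + q * y - w) = p * (b * (x - w)) + q * (b * (y - w)) := by
      linear_combination b * w * hpq
    exact le_of_eq this
  have h2 : ConvexOn ℝ Set.univ (fun p : ℝ => max (p - w) 0) := by
    have := ((convexOn_id (convex_univ : Convex ℝ (Set.univ : Set ℝ))).sub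
      (concaveOn_const w convex_univ)).sup (convexOn_const 0 convex_univ)
    exact this
  have h3 := h2.smul (by linarith : (0:ℝ) ≤ a - b)
  have := h1.add h3
  exact this

lemma term_integrable {Ω : Type*} [MeasurableSpace Ω] (μ : Measure Ω)
    [IsProbabilityMeasure μ] (a b c : ℝ) (W : Ω → ℝ) (hW : Integrable W μ) :
    Integrable (fun ω => a * max (c - W ω) 0 - b * (-(min (c - W ω) 0))) μ := by
  have hf : Integrable (fun ω => c - W ω) μ := (integrable_const c).sub hW
  have h1 : Integrable (fun ω => max (c - W ω) 0) μ := hf.pos_part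
  have h2 : Integrable (fun ω => max (-(c - W ω)) 0) μ := hf.neg_part
  have heq : (fun ω => a * max (c - W ω) 0 - b * (-(min (c - W ω) 0)))
      = fun ω => a * max (c - W ω) 0 - b * max (-(c - W ω)) 0 := by
    funext ω
    have hm : -(min (c - W ω) 0) = max (-(c - W ω)) 0 := by
      rcases le_total (c - W ω) 0 with hp | hp
      · rw [min_eq_left hp, max_eq_left (neg_nonneg.mpr hp)]
      · rw [min_eq_right hp, max_eq_right (neg_nonpos.mpr hp), neg_zero]
    rw [hm]
  rw [heq]
  exact (h1.const_mul a).sub (h2.const_mul b)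

theorem ed_objective_convex
    {Ω : Type*} [MeasurableSpace Ω] (μ : Measure Ω) [IsProbabilityMeasure μ]
    (M N T : ℕ) (C : Fin M → ℝ → ℝ) (U : Fin N → ℝ → ℝ)
    (hC : ∀ m, ConvexOn ℝ Set.univ (C m)) (hU : ∀ n, ConcaveOn ℝ Set.univ (U n))
    (α β : Fin T → ℝ) (hαβ : ∀ t, β t ≤ α t)
    (W : Fin T → Ω → ℝ) (hW : ∀ t, Integrable (W t) μ) :
    ConvexOn ℝ Set.univ
      (fun x : (Fin M → Fin T → ℝ) × (Fin N → Fin T → ℝ) × (Fin T → ℝ) =>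
        (∑ t, ∑ m, C m (x.1 m t)) - (∑ t, ∑ n, U n (x.2.1 n t))
          + ∫ ω, (∑ t, (α t * max (x.2.2 t - W t ω) 0
              - β t * (-(min (x.2.2 t - W t ω) 0)))) ∂μ) := by
  have hint : ∀ z : Fin T → ℝ,
      Integrable (fun ω => ∑ t, (α t * max (z t - W t ω) 0
        - β t * (-(min (z t - W t ω) 0)))) μ := by
    intro z
    exact integrable_finset_sum _ fun t _ => term_integrable μ (α t) (β t) (z t) (W t) (hW t)
  refine ⟨convex_univ, ?_⟩
  intro x _ y _ p q hp hq hpq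
  simp only [Prod.fst_add, Prod.smul_fst, Prod.snd_add, Prod.smul_snd, Pi.add_apply,
    Pi.smul_apply, smul_eq_mul]
  -- inequality for generators
  have hA : ∑ t, ∑ m, C m (p * x.1 m t + q * y.1 m t)
      ≤ p * (∑ t, ∑ m, C m (x.1 m t)) + q * (∑ t, ∑ m, C m (y.1 m t)) := by
    calc ∑ t, ∑ m, C m (p * x.1 m t + q * y.1 m t)
        ≤ ∑ t, ∑ m, (p * C m (x.1 m t) + q * C m (y.1 m t)) := by
          refine Finset.sum_le_sum fun t _ => Finset.sum_le_sum fun m _ => ?_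
          simpa [smul_eq_mul] using
            (hC m).2 (Set.mem_univ (x.1 m t)) (Set.mem_univ (y.1 m t)) hp hq hpq
      _ = p * (∑ t, ∑ m, C m (x.1 m t)) + q * (∑ t, ∑ m, C m (y.1 m t)) := by
          simp [Finset.sum_add_distrib, Finset.mul_sum]
  -- inequality for demands
  have hB : p * (∑ t, ∑ n, U n (x.2.1 n t)) + q * (∑ t, ∑ n, U n (y.2.1 n t))
      ≤ ∑ t, ∑ n, U n (p * x.2.1 n t + q * y.2.1 n t) := by
    calc p * (∑ t, ∑ n, U n (x.2.1 n t)) + q * (∑ t, ∑ n, U n (y.2.1 n t))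
        = ∑ t, ∑ n, (p * U n (x.2.1 n t) + q * U n (y.2.1 n t)) := by
          simp [Finset.sum_add_distrib, Finset.mul_sum]
      _ ≤ ∑ t, ∑ n, U n (p * x.2.1 n t + q * y.2.1 n t) := by
          refine Finset.sum_le_sum fun t _ => Finset.sum_le_sum fun n _ => ?_
          simpa [smul_eq_mul] using
            (hU n).2 (Set.mem_univ (x.2.1 n t)) (Set.mem_univ (y.2.1 n t)) hp hq hpq
  -- inequality for the expected transaction cost
  have hI : (∫ ω, (∑ t, (α t * max ((p * x.2.2 t + q * y.2.2 t) - W t ω) 0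
        - β t * (-(min ((p * x.2.2 t + q * y.2.2 t) - W t ω) 0)))) ∂μ)
      ≤ p * (∫ ω, (∑ t, (α t * max (x.2.2 t - W t ω) 0
            - β t * (-(min (x.2.2 t - W t ω) 0)))) ∂μ)
        + q * (∫ ω, (∑ t, (α t * max (y.2.2 t - W t ω) 0
            - β t * (-(min (y.2.2 t - W t ω) 0)))) ∂μ) := by
    have hmono : (∫ ω, (∑ t, (α t * max ((p * x.2.2 t + q * y.2.2 t) - W t ω) 0
          - β t * (-(min ((p * x.2.2 t + q * y.2.2 t) - W t ω) 0)))) ∂μ)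
        ≤ ∫ ω, (p * (∑ t, (α t * max (x.2.2 t - W t ω) 0
              - β t * (-(min (x.2.2 t - W t ω) 0))))
            + q * (∑ t, (α t * max (y.2.2 t - W t ω) 0
              - β t * (-(min (y.2.2 t - W t ω) 0))))) ∂μ := by
      refine integral_mono (hint _) (((hint _).const_mul p).add ((hint _).const_mul q)) ?_
      intro ω
      calc ∑ t, (α t * max ((p * x.2.2 t + q * y.2.2 t) - W t ω) 0
            - β t * (-(min ((p * x.2.2 t + q * y.2.2 t) - W t ω) 0)))
          ≤ ∑ t, (p * (α t * max (x.2.2 t - W t ω) 0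
                - β t * (-(min (x.2.2 t - W t ω) 0)))
              + q * (α t * max (y.2.2 t - W t ω) 0
                - β t * (-(min (y.2.2 t - W t ω) 0)))) := by
            refine Finset.sum_le_sum fun t _ => ?_
            simpa [smul_eq_mul] using
              (key_convex (α t) (β t) (W t ω) (hαβ t)).2
                (Set.mem_univ (x.2.2 t)) (Set.mem_univ (y.2.2 t)) hp hq hpq
        _ = p * (∑ t, (α t * max (x.2.2 t - W t ω) 0
                - β t * (-(min (x.2.2 t - W t ω) 0))))
            + q * (∑ t, (α t * max (y.2.2 t - W t ω) 0
                - β t * (-(min (y.2.2 t - W t ω) 0)))) := by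
            rw [Finset.sum_add_distrib, ← Finset.mul_sum, ← Finset.mul_sum]
    calc _ ≤ _ := hmono
      _ = _ := by
        rw [integral_add ((hint _).const_mul p) ((hint _).const_mul q),
          integral_const_mul, integral_const_mul]
  linarith
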